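/- arXiv:2007.09253 — 3 statements merged into one kernel-verified Lean document; each statement's English description precedes it below -/
import Mathlib

section
/- Let G, H be finite groups, X ≤ G×H a subgroup and M a left 𝕜X-module. (a) The map M° → LHom^{X,X*X°}_{𝕜G}(M, 𝕜[k₁(X)]), λ ↦ (m ↦ Σ_{g ∈ k₁(X)} λ(g⁻¹m)·g), is a well-defined isomorphism of 𝕜X°-modules, with inverse sending f to (m ↦ t(f(m))) where t: 𝕜[k₁(X)] → 𝕜 is the 𝕜-linear map with g ↦ δ_{g,1}. (b) The map M° → RHom^{X,X°*X}_{𝕜H}(M, 𝕜[k₂(X)]), λ ↦ (m ↦ Σ_{h ∈ k₂(X)} λ(m·h⁻¹)·h), is a well-defined isomorphism of 𝕜X°-modules, with inverse f ↦ (m ↦ t(f(m))). -/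
namespace Stmt11

/-- `k₁(X) = {g ∈ G ∣ (g,1) ∈ X}`. -/
def k1 {G H : Type*} [Group G] [Group H] (X : Subgroup (G × H)) : Subgroup G :=
  X.comap (MonoidHom.inl G H)

/-- `k₂(X) = {h ∈ H ∣ (1,h) ∈ X}`. -/
def k2 {G H : Type*} [Group G] [Group H] (X : Subgroup (G × H)) : Subgroup H :=
  X.comap (MonoidHom.inr G H)

/-- `p₁(X)`, the image of `X` under the first projection. -/
def p1 {G H : Type*} [Group G] [Group H] (X : Subgroup (G × H)) : Subgroup G :=
  X.map (MonoidHom.fst G H)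

/-- `p₂(X)`, the image of `X` under the second projection. -/
def p2 {G H : Type*} [Group G] [Group H] (X : Subgroup (G × H)) : Subgroup H :=
  X.map (MonoidHom.snd G H)

/-- The opposite subgroup `X° = {(h,g) ∣ (g,h) ∈ X}`. -/
def opp {G H : Type*} [Group G] [Group H] (X : Subgroup (G × H)) : Subgroup (H × G) :=
  X.map ((MulEquiv.prodComm : (G × H) ≃* (H × G)).toMonoidHom)

/-- The composition `X*Y` of subgroup correspondences. -/
def comp {G H K : Type*} [Group G] [Group H] [Group K]
    (X : Subgroup (G × H)) (Y : Subgroup (H × K)) : Subgroup (G × K) where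
  carrier := {gk | ∃ h : H, (gk.1, h) ∈ X ∧ (h, gk.2) ∈ Y}
  one_mem' := ⟨1, X.one_mem, Y.one_mem⟩
  mul_mem' := by
    rintro ⟨g, k⟩ ⟨g', k'⟩ ⟨h, hX, hY⟩ ⟨h', hX', hY'⟩
    exact ⟨h * h', X.mul_mem hX hX', Y.mul_mem hY hY'⟩
  inv_mem' := by
    rintro ⟨g, k⟩ ⟨h, hX, hY⟩
    exact ⟨h⁻¹, X.inv_mem hX, Y.inv_mem hY⟩

lemma mem_comp {G H K : Type*} [Group G] [Group H] [Group K]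
    {X : Subgroup (G × H)} {Y : Subgroup (H × K)} {x : G × K} :
    x ∈ comp X Y ↔ ∃ h : H, (x.1, h) ∈ X ∧ (h, x.2) ∈ Y := Iff.rfl

lemma mem_opp {G H : Type*} [Group G] [Group H] {X : Subgroup (G × H)} {x : H × G} :
    x ∈ opp X ↔ (x.2, x.1) ∈ X := by
  rw [opp, Subgroup.mem_map]
  constructor
  · rintro ⟨⟨g, h⟩, hgh, rfl⟩
    simpa using hgh
  · intro hx
    exact ⟨(x.2, x.1), hx, rfl⟩

/-- The diagonal subgroup `Δ(P) = {(g,g) ∣ g ∈ P} ≤ G × G`. -/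
def diag {G : Type*} [Group G] (P : Subgroup G) : Subgroup (G × G) :=
  (P.subtype.prod P.subtype).range

/-- The twisted diagonal subgroup `Δ(P,φ,Q) = {(φ y, y) ∣ y ∈ Q} ≤ G × H`. -/
def tdiag {G H : Type*} [Group G] [Group H] (P : Subgroup G) (Q : Subgroup H)
    (φ : Q ≃* P) : Subgroup (G × H) :=
  ((P.subtype.comp φ.toMonoidHom).prod Q.subtype).range

open scoped TensorProduct

section ExtendedTensor

variable {𝕜 : Type*} [CommRing 𝕜]

/-- The submodule of relations defining the balanced tensor product
`M ⊗_{𝕜[k₂(X)∩k₁(Y)]} N` over the middle group: it is spanned by the elements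
`(m·b) ⊗ n - m ⊗ (b·n)` with `b ∈ k₂(X)∩k₁(Y)`, where `m·b = (1,b⁻¹)·m` and
`b·n = (b,1)·n`. -/
def midRel {A B C : Type*} [Group A] [Group B] [Group C]
    {M N : Type*} [AddCommGroup M] [Module 𝕜 M] [AddCommGroup N] [Module 𝕜 N]
    (X : Subgroup (A × B)) (Y : Subgroup (B × C))
    (ρ : Representation 𝕜 ↥X M) (σ : Representation 𝕜 ↥Y N) :
    Submodule 𝕜 (M ⊗[𝕜] N) :=
  Submodule.span 𝕜 {z | ∃ (b : B) (h1 : (((1 : A), b⁻¹) : A × B) ∈ X)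
    (h2 : ((b, (1 : C)) : B × C) ∈ Y) (m : M) (n : N),
      z = (ρ ⟨((1 : A), b⁻¹), h1⟩ m) ⊗ₜ[𝕜] n - m ⊗ₜ[𝕜] (σ ⟨(b, (1 : C)), h2⟩ n)}

/-- The underlying `𝕜`-module of the extended tensor product `M ⊗^{X,Y}_{𝕜B} N`. -/
abbrev ExtTen {A B C : Type*} [Group A] [Group B] [Group C]
    {M N : Type*} [AddCommGroup M] [Module 𝕜 M] [AddCommGroup N] [Module 𝕜 N]
    (X : Subgroup (A × B)) (Y : Subgroup (B × C))
    (ρ : Representation 𝕜 ↥X M) (σ : Representation 𝕜 ↥Y N) :=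
  (M ⊗[𝕜] N) ⧸ midRel X Y ρ σ

/-- The canonical projection onto the extended tensor product. -/
def extMk {A B C : Type*} [Group A] [Group B] [Group C]
    {M N : Type*} [AddCommGroup M] [Module 𝕜 M] [AddCommGroup N] [Module 𝕜 N]
    (X : Subgroup (A × B)) (Y : Subgroup (B × C))
    (ρ : Representation 𝕜 ↥X M) (σ : Representation 𝕜 ↥Y N) :
    (M ⊗[𝕜] N) →ₗ[𝕜] ExtTen X Y ρ σ :=
  (midRel X Y ρ σ).mkQ

/-- The `𝕜`-module `LHom^{X,Y}_{𝕜A}(M,N) = Hom_{𝕜[k₁(X)∩k₁(Y)]}(M,N)` of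
`𝕜`-linear maps commuting with the actions of `k₁(X)∩k₁(Y)` (via `(a,1)`). -/
def lHomSub {A B C : Type*} [Group A] [Group B] [Group C]
    {M N : Type*} [AddCommGroup M] [Module 𝕜 M] [AddCommGroup N] [Module 𝕜 N]
    (X : Subgroup (A × B)) (Y : Subgroup (A × C))
    (ρ : Representation 𝕜 ↥X M) (σ : Representation 𝕜 ↥Y N) :
    Submodule 𝕜 (M →ₗ[𝕜] N) where
  carrier := {f | ∀ (a : A) (h1 : ((a, (1 : B)) : A × B) ∈ X)
      (h2 : ((a, (1 : C)) : A × C) ∈ Y) (m : M),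
        f (ρ ⟨(a, 1), h1⟩ m) = σ ⟨(a, 1), h2⟩ (f m)}
  add_mem' := by
    intro f g hf hg a h1 h2 m
    simp only [LinearMap.add_apply, hf a h1 h2 m, hg a h1 h2 m, map_add]
  zero_mem' := by
    intro a h1 h2 m
    simp
  smul_mem' := by
    intro c f hf a h1 h2 m
    simp only [LinearMap.smul_apply, hf a h1 h2 m, map_smul]

/-- The `𝕜`-module `RHom^{X,Y}_{𝕜A}(M,N) = Hom_{𝕜[k₂(X)∩k₂(Y)]}(M,N)` of
`𝕜`-linear maps commuting with the actions of `k₂(X)∩k₂(Y)` (via `(1,a)`). -/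
def rHomSub {A B C : Type*} [Group A] [Group B] [Group C]
    {M N : Type*} [AddCommGroup M] [Module 𝕜 M] [AddCommGroup N] [Module 𝕜 N]
    (X : Subgroup (B × A)) (Y : Subgroup (C × A))
    (ρ : Representation 𝕜 ↥X M) (σ : Representation 𝕜 ↥Y N) :
    Submodule 𝕜 (M →ₗ[𝕜] N) where
  carrier := {f | ∀ (a : A) (h1 : (((1 : B), a) : B × A) ∈ X)
      (h2 : (((1 : C), a) : C × A) ∈ Y) (m : M),
        f (ρ ⟨(1, a), h1⟩ m) = σ ⟨(1, a), h2⟩ (f m)}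
  add_mem' := by
    intro f g hf hg a h1 h2 m
    simp only [LinearMap.add_apply, hf a h1 h2 m, hg a h1 h2 m, map_add]
  zero_mem' := by
    intro a h1 h2 m
    simp
  smul_mem' := by
    intro c f hf a h1 h2 m
    simp only [LinearMap.smul_apply, hf a h1 h2 m, map_smul]

/-- The `𝕜`-module of `𝕜I`-linear maps between two representations of a group
`I`, e.g. `Hom_{𝕜[X*X°]}(-,-)` or `Hom_{𝕜X}(-,-)`. -/
def fullHomSub {I : Type*} [Group I]
    {M N : Type*} [AddCommGroup M] [Module 𝕜 M] [AddCommGroup N] [Module 𝕜 N]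
    (ρ : Representation 𝕜 I M) (σ : Representation 𝕜 I N) :
    Submodule 𝕜 (M →ₗ[𝕜] N) where
  carrier := {f | ∀ (x : I) (m : M), f (ρ x m) = σ x (f m)}
  add_mem' := by
    intro f g hf hg x m
    simp only [LinearMap.add_apply, hf x m, hg x m, map_add]
  zero_mem' := by
    intro x m
    simp
  smul_mem' := by
    intro c f hf x m
    simp only [LinearMap.smul_apply, hf x m, map_smul]

/-- Relations defining the induced module `Ind_{X'}^{X}(M') = 𝕜X ⊗_{𝕜X'} M'`:
spanned by `(b·a) ⊗ m - b ⊗ (a·m)` for `a ∈ X'`, `b ∈ X`. -/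
noncomputable def indRel {I : Type*} [Group I] (X' X : Subgroup I)
    {M' : Type*} [AddCommGroup M'] [Module 𝕜 M']
    (ρ' : Representation 𝕜 ↥X' M') :
    Submodule 𝕜 (MonoidAlgebra 𝕜 ↥X ⊗[𝕜] M') :=
  Submodule.span 𝕜 {z | ∃ (b : ↥X) (a : I) (h1 : a ∈ X') (h2 : a ∈ X) (m : M'),
    z = (MonoidAlgebra.single (b * ⟨a, h2⟩) (1 : 𝕜)) ⊗ₜ[𝕜] m -
        (MonoidAlgebra.single b (1 : 𝕜)) ⊗ₜ[𝕜] (ρ' ⟨a, h1⟩ m)}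

/-- The underlying `𝕜`-module of the induced module `Ind_{X'}^{X}(M')`. -/
abbrev Ind {I : Type*} [Group I] (X' X : Subgroup I)
    {M' : Type*} [AddCommGroup M'] [Module 𝕜 M']
    (ρ' : Representation 𝕜 ↥X' M') :=
  (MonoidAlgebra 𝕜 ↥X ⊗[𝕜] M') ⧸ indRel X' X ρ'

/-- The canonical projection onto the induced module. -/
noncomputable def indMk {I : Type*} [Group I] (X' X : Subgroup I)
    {M' : Type*} [AddCommGroup M'] [Module 𝕜 M']
    (ρ' : Representation 𝕜 ↥X' M') :
    (MonoidAlgebra 𝕜 ↥X ⊗[𝕜] M') →ₗ[𝕜] Ind X' X ρ' :=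
  (indRel X' X ρ').mkQ

end ExtendedTensor

section Homs

variable {G H : Type*} [Group G] [Group H]

lemma k1_prod_mem {X : Subgroup (G × H)} (u : ↥(k1 X)) :
    (((u : G), (1 : H)) : G × H) ∈ X := u.2

lemma k1_inv_prod_mem {X : Subgroup (G × H)} (u : ↥(k1 X)) :
    (((u : G)⁻¹, (1 : H)) : G × H) ∈ X := by
  simpa using X.inv_mem (k1_prod_mem u)

lemma k2_prod_mem {X : Subgroup (G × H)} (u : ↥(k2 X)) :
    (((1 : G), (u : H)) : G × H) ∈ X := u.2

/-- The embedding `k₁(X) →* X`, `u ↦ (u,1)`. -/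
def k1Hom (X : Subgroup (G × H)) : ↥(k1 X) →* ↥X where
  toFun u := ⟨((u : G), (1 : H)), u.2⟩
  map_one' := rfl
  map_mul' u v := Subtype.ext (by simp)

/-- The embedding `k₁(X) →* X°`, `u ↦ (1,u)`, giving the right `𝕜[k₁(X)]`-module
structure (read as a left module) on left `𝕜X°`-modules. -/
def k1HomOp (X : Subgroup (G × H)) : ↥(k1 X) →* ↥(opp X) where
  toFun u := ⟨((1 : H), (u : G)), mem_opp.mpr u.2⟩
  map_one' := rfl
  map_mul' u v := Subtype.ext (by simp)

/-- The embedding `k₂(X) →* X`, `u ↦ (1,u)`. -/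
def k2Hom (X : Subgroup (G × H)) : ↥(k2 X) →* ↥X where
  toFun u := ⟨((1 : G), (u : H)), u.2⟩
  map_one' := rfl
  map_mul' u v := Subtype.ext (by simp)

end Homs

section Aux

variable {𝕜 : Type*} [CommRing 𝕜] {G H : Type*} [Group G] [Group H]

lemma mem_compXop_of_k1 {X : Subgroup (G × H)} {g : G} (hg : g ∈ k1 X) :
    ((g, (1 : G)) : G × G) ∈ comp X (opp X) :=
  ⟨1, hg, one_mem _⟩

lemma mem_opXcomp_of_k2 {X : Subgroup (G × H)} {h : H} (hh : h ∈ k2 X) :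
    (((1 : H), h) : H × H) ∈ comp (opp X) X :=
  ⟨1, one_mem _, hh⟩

lemma conj_mem_k1 {X : Subgroup (G × H)} {c : G} {b : H} (hcb : (c, b) ∈ X)
    {g : G} (hg : g ∈ k1 X) : c * g * c⁻¹ ∈ k1 X := by
  have h2 : ((c, b) * (g, 1) * ((c, b))⁻¹ : G × H) ∈ X :=
    mul_mem (mul_mem hcb hg) (inv_mem hcb)
  have h3 : ((c * g * c⁻¹, (1 : H)) : G × H) ∈ X := by simpa [Prod.ext_iff] using h2
  exact h3

lemma conj_mem_k2 {X : Subgroup (G × H)} {c : G} {b : H} (hcb : (c, b) ∈ X)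
    {h : H} (hh : h ∈ k2 X) : b * h * b⁻¹ ∈ k2 X := by
  have h2 : ((c, b) * (1, h) * ((c, b))⁻¹ : G × H) ∈ X :=
    mul_mem (mul_mem hcb hh) (inv_mem hcb)
  have h3 : (((1 : G), b * h * b⁻¹) : G × H) ∈ X := by simpa [Prod.ext_iff] using h2
  exact h3

lemma sum_single_apply' {I : Type*} [Fintype I] [DecidableEq I]
    (c : I → 𝕜) (u : I) :
    (∑ g : I, MonoidAlgebra.single g (c g)).coeff u = c u := by
  classical
  rw [MonoidAlgebra.coeff_sum, Finset.sum_apply']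
  simp [MonoidAlgebra.coeff_single, Finsupp.single_apply]

end Aux

section Maps

variable {𝕜 : Type*} [CommRing 𝕜] {G H : Type*} [Group G] [Group H]
variable (X : Subgroup (G × H))
variable {M : Type*} [AddCommGroup M] [Module 𝕜 M] (ρM : Representation 𝕜 ↥X M)

/-- The forward map of part (a), `λ ↦ (m ↦ ∑_g λ(g⁻¹m)·g)`. -/
noncomputable def phiFun [Fintype ↥(k1 X)] (lam : M →ₗ[𝕜] 𝕜) :
    M →ₗ[𝕜] MonoidAlgebra 𝕜 ↥(k1 X) where
  toFun m := ∑ g : ↥(k1 X), MonoidAlgebra.single g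
      (lam (ρM ⟨((g : G)⁻¹, (1 : H)), k1_inv_prod_mem g⟩ m))
  map_add' m n := by simp [Finsupp.single_add, Finset.sum_add_distrib]
  map_smul' r m := by simp [Finsupp.smul_single, Finset.smul_sum]

@[simp] lemma phiFun_apply [Fintype ↥(k1 X)] (lam : M →ₗ[𝕜] 𝕜) (m : M) :
    phiFun X ρM lam m = ∑ g : ↥(k1 X), MonoidAlgebra.single g
      (lam (ρM ⟨((g : G)⁻¹, (1 : H)), k1_inv_prod_mem g⟩ m)) := rfl

/-- The forward map of part (b), `λ ↦ (m ↦ ∑_h λ(m·h⁻¹)·h)`. -/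
noncomputable def psiFun [Fintype ↥(k2 X)] (lam : M →ₗ[𝕜] 𝕜) :
    M →ₗ[𝕜] MonoidAlgebra 𝕜 ↥(k2 X) where
  toFun m := ∑ h : ↥(k2 X), MonoidAlgebra.single h
      (lam (ρM ⟨((1 : G), (h : H)), k2_prod_mem h⟩ m))
  map_add' m n := by simp [Finsupp.single_add, Finset.sum_add_distrib]
  map_smul' r m := by simp [Finsupp.smul_single, Finset.smul_sum]

@[simp] lemma psiFun_apply [Fintype ↥(k2 X)] (lam : M →ₗ[𝕜] 𝕜) (m : M) :
    psiFun X ρM lam m = ∑ h : ↥(k2 X), MonoidAlgebra.single h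
      (lam (ρM ⟨((1 : G), (h : H)), k2_prod_mem h⟩ m)) := rfl

/-- `phiFun` as a linear map in `λ`. -/
noncomputable def phiLin [Fintype ↥(k1 X)] :
    (M →ₗ[𝕜] 𝕜) →ₗ[𝕜] (M →ₗ[𝕜] MonoidAlgebra 𝕜 ↥(k1 X)) where
  toFun := phiFun X ρM
  map_add' l1 l2 := by
    ext m; simp [phiFun, Finsupp.single_add, Finset.sum_add_distrib]
  map_smul' r l := by
    ext m; simp [phiFun, Finsupp.smul_single, Finset.smul_sum]

/-- `psiFun` as a linear map in `λ`. -/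
noncomputable def psiLin [Fintype ↥(k2 X)] :
    (M →ₗ[𝕜] 𝕜) →ₗ[𝕜] (M →ₗ[𝕜] MonoidAlgebra 𝕜 ↥(k2 X)) where
  toFun := psiFun X ρM
  map_add' l1 l2 := by
    ext m; simp [psiFun, Finsupp.single_add, Finset.sum_add_distrib]
  map_smul' r l := by
    ext m; simp [psiFun, Finsupp.smul_single, Finset.smul_sum]

/-- The map `f ↦ (m ↦ (f m) 1)`, taking the coefficient at `1`. -/
noncomputable def evalOne {I : Type*} [One I] :
    (M →ₗ[𝕜] MonoidAlgebra 𝕜 I) →ₗ[𝕜] (M →ₗ[𝕜] 𝕜) where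
  toFun f := (Finsupp.lapply (1 : I) : (I →₀ 𝕜) →ₗ[𝕜] 𝕜).comp
    ((MonoidAlgebra.coeffLinearEquiv 𝕜 : MonoidAlgebra 𝕜 I ≃ₗ[𝕜] (I →₀ 𝕜)).toLinearMap.comp f)
  map_add' f g := by ext m; exact Finsupp.add_apply (f m).coeff (g m).coeff 1
  map_smul' r f := by ext m; exact Finsupp.smul_apply r (f m).coeff 1

@[simp] lemma evalOne_apply {I : Type*} [One I]
    (f : M →ₗ[𝕜] MonoidAlgebra 𝕜 I) (m : M) :
    evalOne (M := M) f m = (f m).coeff 1 := rfl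

end Maps

/-- (a) `M° ≅ LHom^{X,X*X°}_{𝕜G}(M, 𝕜[k₁(X)])` as `𝕜X°`-modules via
`λ ↦ (m ↦ ∑_{g ∈ k₁(X)} λ(g⁻¹m)·g)`, with inverse `f ↦ (m ↦ t(f m))` where `t` takes
the coefficient of `1`; (b) `M° ≅ RHom^{X,X°*X}_{𝕜H}(M, 𝕜[k₂(X)])` as `𝕜X°`-modules
via `λ ↦ (m ↦ ∑_{h ∈ k₂(X)} λ(m·h⁻¹)·h)`, with inverse `f ↦ (m ↦ t(f m))`. -/
theorem stmt11 {𝕜 : Type*} [CommRing 𝕜]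
    {G H : Type*} [Group G] [Group H] [Finite G] [Finite H]
    (X : Subgroup (G × H)) [Fintype ↥(k1 X)] [Fintype ↥(k2 X)]
    {M : Type*} [AddCommGroup M] [Module 𝕜 M]
    (ρM : Representation 𝕜 ↥X M)
    -- the `𝕜[X*X°]`-module structure on `𝕜[k₁(X)]`, `(g,g')·u = g·u·g'⁻¹`
    (ρA : Representation 𝕜 ↥(comp X (opp X)) (MonoidAlgebra 𝕜 ↥(k1 X)))
    (hρA : ∀ (g g' : G) (hm : (g, g') ∈ comp X (opp X)) (u : ↥(k1 X))
      (hu : g * (u : G) * g'⁻¹ ∈ k1 X) (c : 𝕜),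
      ρA ⟨(g, g'), hm⟩ (MonoidAlgebra.single u c) =
        MonoidAlgebra.single (⟨g * (u : G) * g'⁻¹, hu⟩ : ↥(k1 X)) c)
    -- the `𝕜[X°*X]`-module structure on `𝕜[k₂(X)]`, `(h,h')·v = h·v·h'⁻¹`
    (ρB : Representation 𝕜 ↥(comp (opp X) X) (MonoidAlgebra 𝕜 ↥(k2 X)))
    (hρB : ∀ (h h' : H) (hm : (h, h') ∈ comp (opp X) X) (v : ↥(k2 X))
      (hv : h * (v : H) * h'⁻¹ ∈ k2 X) (c : 𝕜),
      ρB ⟨(h, h'), hm⟩ (MonoidAlgebra.single v c) =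
        MonoidAlgebra.single (⟨h * (v : H) * h'⁻¹, hv⟩ : ↥(k2 X)) c)
    -- the `𝕜X°`-module structure on the dual `M°`
    (ρD : Representation 𝕜 ↥(opp X) (M →ₗ[𝕜] 𝕜))
    (hρD : ∀ (b : H) (c : G) (hbc : (b, c) ∈ opp X) (hcb : (c, b) ∈ X)
      (lam : M →ₗ[𝕜] 𝕜) (m : M),
      (ρD ⟨(b, c), hbc⟩ lam) m = lam (ρM (⟨(c, b), hcb⟩)⁻¹ m))
    -- the `𝕜[X°*(X*X°)]`-module structure on `LHom^{X,X*X°}(M, 𝕜[k₁(X)])`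
    (ρE : Representation 𝕜 ↥(comp (opp X) (comp X (opp X)))
      ↥(lHomSub X (comp X (opp X)) ρM ρA))
    (hρE : ∀ (b : H) (c : G) (hbc : (b, c) ∈ comp (opp X) (comp X (opp X)))
      (a : G) (h1 : (a, b) ∈ X) (h2 : (a, c) ∈ comp X (opp X))
      (f : ↥(lHomSub X (comp X (opp X)) ρM ρA)) (m : M),
      ((ρE ⟨(b, c), hbc⟩ f : M →ₗ[𝕜] MonoidAlgebra 𝕜 ↥(k1 X))) m =
        ρA ⟨(a, c), h2⟩ ((f : M →ₗ[𝕜] MonoidAlgebra 𝕜 ↥(k1 X)) (ρM (⟨(a, b), h1⟩)⁻¹ m)))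
    -- the `𝕜[(X°*X)*X°]`-module structure on `RHom^{X,X°*X}(M, 𝕜[k₂(X)])`
    (ρF : Representation 𝕜 ↥(comp (comp (opp X) X) (opp X))
      ↥(rHomSub X (comp (opp X) X) ρM ρB))
    (hρF : ∀ (c : H) (b : G) (hcb : (c, b) ∈ comp (comp (opp X) X) (opp X))
      (a : H) (h1 : (c, a) ∈ comp (opp X) X) (h2 : (b, a) ∈ X)
      (f : ↥(rHomSub X (comp (opp X) X) ρM ρB)) (m : M),
      ((ρF ⟨(c, b), hcb⟩ f : M →ₗ[𝕜] MonoidAlgebra 𝕜 ↥(k2 X))) m =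
        ρB ⟨(c, a), h1⟩ ((f : M →ₗ[𝕜] MonoidAlgebra 𝕜 ↥(k2 X)) (ρM (⟨(b, a), h2⟩)⁻¹ m))) :
    (∃ Φ : (M →ₗ[𝕜] 𝕜) ≃ₗ[𝕜] ↥(lHomSub X (comp X (opp X)) ρM ρA),
      (∀ (lam : M →ₗ[𝕜] 𝕜) (m : M),
        ((Φ lam : M →ₗ[𝕜] MonoidAlgebra 𝕜 ↥(k1 X))) m =
          ∑ g : ↥(k1 X), MonoidAlgebra.single g
            (lam (ρM ⟨((g : G)⁻¹, (1 : H)), k1_inv_prod_mem g⟩ m))) ∧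
      (∀ (f : ↥(lHomSub X (comp X (opp X)) ρM ρA)) (m : M),
        (Φ.symm f) m = ((f : M →ₗ[𝕜] MonoidAlgebra 𝕜 ↥(k1 X)) m).coeff 1) ∧
      (∀ (x : H × G) (h1 : x ∈ opp X)
        (h2 : x ∈ comp (opp X) (comp X (opp X))) (lam : M →ₗ[𝕜] 𝕜),
        Φ (ρD ⟨x, h1⟩ lam) = ρE ⟨x, h2⟩ (Φ lam))) ∧
    (∃ Ψ : (M →ₗ[𝕜] 𝕜) ≃ₗ[𝕜] ↥(rHomSub X (comp (opp X) X) ρM ρB),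
      (∀ (lam : M →ₗ[𝕜] 𝕜) (m : M),
        ((Ψ lam : M →ₗ[𝕜] MonoidAlgebra 𝕜 ↥(k2 X))) m =
          ∑ h : ↥(k2 X), MonoidAlgebra.single h
            (lam (ρM ⟨((1 : G), (h : H)), k2_prod_mem h⟩ m))) ∧
      (∀ (f : ↥(rHomSub X (comp (opp X) X) ρM ρB)) (m : M),
        (Ψ.symm f) m = ((f : M →ₗ[𝕜] MonoidAlgebra 𝕜 ↥(k2 X)) m).coeff 1) ∧
      (∀ (x : H × G) (h1 : x ∈ opp X)
        (h2 : x ∈ comp (comp (opp X) X) (opp X)) (lam : M →ₗ[𝕜] 𝕜),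
        Ψ (ρD ⟨x, h1⟩ lam) = ρF ⟨x, h2⟩ (Ψ lam))) := by
  classical
  have key : ∀ (x y : ↥X) (m : M), ρM x (ρM y m) = ρM (x * y) m := by
    intro x y m
    rw [map_mul]
    rfl
  have key2 : ∀ (x y z w : ↥X), x * y = z * w → ∀ m : M,
      ρM x (ρM y m) = ρM z (ρM w m) := by
    intro x y z w h m
    rw [key, key, h]
  have keyz : ∀ (x y z : ↥X), x * y = z → ∀ m : M,
      ρM x (ρM y m) = ρM z m := by
    intro x y z h m
    rw [key, h]
  constructor
  · -- part (a)
    have hmem : ∀ lam, phiFun X ρM lam ∈ lHomSub X (comp X (opp X)) ρM ρA := by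
      intro lam a h1 h2 m
      have h1' : a ∈ k1 X := h1
      have hcoef : ∀ g : ↥(k1 X), a * (g : G) * (1 : G)⁻¹ ∈ k1 X := fun g => by
        simpa using mul_mem h1' g.2
      rw [phiFun_apply, phiFun_apply, map_sum,
        Finset.sum_congr rfl (fun g _ => hρA a 1 h2 g (hcoef g) _)]
      refine (Fintype.sum_equiv (Equiv.mulLeft (⟨a, h1'⟩ : ↥(k1 X))) _ _ ?_).symm
      intro g
      have hidx : (⟨a * (g : G) * (1 : G)⁻¹, hcoef g⟩ : ↥(k1 X)) =
          (Equiv.mulLeft (⟨a, h1'⟩ : ↥(k1 X))) g := Subtype.ext (by simp)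
      rw [hidx]
      refine congrArg _ ?_
      refine (congrArg lam ?_).symm
      exact keyz _ _ _ (Subtype.ext (by simp [Prod.ext_iff, mul_inv_rev, mul_assoc])) m
    have hA1 : ∀ (g : ↥(k1 X)) (hm : (((g : G)⁻¹, (1 : G)) : G × G) ∈ comp X (opp X))
        (v : MonoidAlgebra 𝕜 ↥(k1 X)), (ρA ⟨((g : G)⁻¹, 1), hm⟩ v).coeff 1 = v.coeff g := by
      intro g hm v
      induction v using MonoidAlgebra.induction_linear with
      | zero => simp
      | add p q hp hq =>
          rw [map_add, MonoidAlgebra.coeff_add, MonoidAlgebra.coeff_add, Finsupp.add_apply,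
            Finsupp.add_apply, hp, hq]
      | single u c =>
        have hu : (g : G)⁻¹ * (u : G) * (1 : G)⁻¹ ∈ k1 X := by
          simpa using mul_mem (inv_mem g.2) u.2
        rw [hρA _ _ hm u hu c]
        have hiff : (⟨(g : G)⁻¹ * (u : G) * (1 : G)⁻¹, hu⟩ : ↥(k1 X)) = 1 ↔ u = g := by
          rw [Subtype.ext_iff, Subtype.ext_iff]
          constructor
          · intro hh
            have h1 : (g : G)⁻¹ * (u : G) = 1 := by simpa using hh
            exact (inv_mul_eq_one.mp h1).symm
          · intro hh
            simp [hh]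
        rw [MonoidAlgebra.coeff_single, MonoidAlgebra.coeff_single, Finsupp.single_apply,
            Finsupp.single_apply, if_congr hiff rfl rfl]
    set P := lHomSub X (comp X (opp X)) ρM ρA with hP
    let Φ₀ : (M →ₗ[𝕜] 𝕜) →ₗ[𝕜] ↥P := (phiLin X ρM).codRestrict P hmem
    let E₀ : ↥P →ₗ[𝕜] (M →ₗ[𝕜] 𝕜) := (evalOne (M := M)).comp P.subtype
    have hleft : E₀.comp Φ₀ = LinearMap.id := by
      refine LinearMap.ext fun lam => LinearMap.ext fun m => ?_
      show (phiFun X ρM lam m).coeff 1 = lam m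
      rw [phiFun_apply, sum_single_apply']
      have h1 : (⟨(((1 : ↥(k1 X)) : G)⁻¹, (1 : H)), k1_inv_prod_mem 1⟩ : ↥X) = 1 :=
        Subtype.ext (by simp)
      rw [h1, map_one]
      rfl
    have hright : Φ₀.comp E₀ = LinearMap.id := by
      refine LinearMap.ext fun f => Subtype.ext (LinearMap.ext fun m =>
        MonoidAlgebra.ext (Finsupp.ext fun u => ?_))
      show (phiFun X ρM (E₀ f) m).coeff u = ((f : M →ₗ[𝕜] MonoidAlgebra 𝕜 ↥(k1 X)) m).coeff u
      rw [phiFun_apply, sum_single_apply']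
      show ((f : M →ₗ[𝕜] MonoidAlgebra 𝕜 ↥(k1 X))
        (ρM ⟨((u : G)⁻¹, (1 : H)), k1_inv_prod_mem u⟩ m)).coeff 1 = _
      rw [f.2 (u : G)⁻¹ (k1_inv_prod_mem u) (mem_compXop_of_k1 (inv_mem u.2)) m]
      exact hA1 u _ _
    let Φ : (M →ₗ[𝕜] 𝕜) ≃ₗ[𝕜] ↥P := LinearEquiv.ofLinear Φ₀ E₀ hright hleft
    refine ⟨Φ, ?_, ?_, ?_⟩
    · intro lam m
      rfl
    · intro f m
      rfl
    · rintro ⟨b, c⟩ h1 h2 lam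
      have hcb : (c, b) ∈ X := mem_opp.mp h1
      have hcc : ((c, c) : G × G) ∈ comp X (opp X) := ⟨b, hcb, h1⟩
      apply Subtype.ext
      refine LinearMap.ext fun m => ?_
      have hE := hρE b c h2 c hcb hcc (Φ lam) m
      show phiFun X ρM (ρD ⟨(b, c), h1⟩ lam) m = _
      rw [hE]
      have hval : ((Φ lam : ↥P) :
          M →ₗ[𝕜] MonoidAlgebra 𝕜 ↥(k1 X)) = phiFun X ρM lam := rfl
      rw [hval]
      have hinv : ((⟨(c, b), hcb⟩ : ↥X))⁻¹ =
          (⟨(c⁻¹, b⁻¹), by simpa using inv_mem hcb⟩ : ↥X) := Subtype.ext rfl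
      rw [hinv, phiFun_apply, phiFun_apply, map_sum,
        Finset.sum_congr rfl (fun g _ => hρA c c hcc g (conj_mem_k1 hcb g.2) _)]
      simp only [hρD b c h1 hcb, hinv]
      have hcb' : ((c⁻¹, b⁻¹) : G × H) ∈ X := by simpa using inv_mem hcb
      let e : ↥(k1 X) ≃ ↥(k1 X) :=
        { toFun := fun g => ⟨c * (g : G) * c⁻¹, conj_mem_k1 hcb g.2⟩
          invFun := fun g => ⟨c⁻¹ * (g : G) * c, by
            simpa using conj_mem_k1 hcb' g.2⟩
          left_inv := fun g => Subtype.ext (by group)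
          right_inv := fun g => Subtype.ext (by group) }
      refine (Fintype.sum_equiv e _ _ ?_).symm
      intro g
      refine congrArg _ ?_
      refine (congrArg lam ?_).symm
      refine key2 _ _ _ _ (Subtype.ext ?_) m
      simp only [e, Equiv.coe_fn_mk]
      simp [Prod.ext_iff, mul_inv_rev, mul_assoc]
  · -- part (b)
    have hmem : ∀ lam, psiFun X ρM lam ∈ rHomSub X (comp (opp X) X) ρM ρB := by
      intro lam a h1 h2 m
      have h1' : a ∈ k2 X := h1
      have hcoef : ∀ v : ↥(k2 X), (1 : H) * (v : H) * a⁻¹ ∈ k2 X := fun v => by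
        simpa using mul_mem v.2 (inv_mem h1')
      rw [psiFun_apply, psiFun_apply, map_sum,
        Finset.sum_congr rfl (fun v _ => hρB 1 a h2 v (hcoef v) _)]
      refine Fintype.sum_equiv (Equiv.mulRight (⟨a, h1'⟩ : ↥(k2 X))) _ _ ?_
      intro h
      have hidx : (⟨(1 : H) * ((Equiv.mulRight (⟨a, h1'⟩ : ↥(k2 X)) h : ↥(k2 X)) : H) * a⁻¹,
          hcoef _⟩ : ↥(k2 X)) = h := Subtype.ext (by simp)
      rw [hidx]
      refine congrArg _ ?_
      refine congrArg lam ?_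
      exact keyz _ _ _ (Subtype.ext (by simp [Prod.ext_iff])) m
    have hB1 : ∀ (h : ↥(k2 X)) (hm : (((1 : H), (h : H)) : H × H) ∈ comp (opp X) X)
        (v : MonoidAlgebra 𝕜 ↥(k2 X)), (ρB ⟨(1, (h : H)), hm⟩ v).coeff 1 = v.coeff h := by
      intro h hm v
      induction v using MonoidAlgebra.induction_linear with
      | zero => simp
      | add p q hp hq =>
          rw [map_add, MonoidAlgebra.coeff_add, MonoidAlgebra.coeff_add, Finsupp.add_apply,
            Finsupp.add_apply, hp, hq]
      | single u c =>
        have hu : (1 : H) * (u : H) * (h : H)⁻¹ ∈ k2 X := by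
          simpa using mul_mem u.2 (inv_mem h.2)
        rw [hρB _ _ hm u hu c]
        have hiff : (⟨(1 : H) * (u : H) * (h : H)⁻¹, hu⟩ : ↥(k2 X)) = 1 ↔ u = h := by
          rw [Subtype.ext_iff, Subtype.ext_iff]
          constructor
          · intro hh
            have h1 : (u : H) * (h : H)⁻¹ = 1 := by simpa using hh
            exact mul_inv_eq_one.mp h1
          · intro hh
            simp [hh]
        rw [MonoidAlgebra.coeff_single, MonoidAlgebra.coeff_single, Finsupp.single_apply,
            Finsupp.single_apply, if_congr hiff rfl rfl]
    set P₂ := rHomSub X (comp (opp X) X) ρM ρB with hP₂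
    let Ψ₀ : (M →ₗ[𝕜] 𝕜) →ₗ[𝕜] ↥P₂ := (psiLin X ρM).codRestrict P₂ hmem
    let E₂ : ↥P₂ →ₗ[𝕜] (M →ₗ[𝕜] 𝕜) := (evalOne (M := M)).comp P₂.subtype
    have hleft : E₂.comp Ψ₀ = LinearMap.id := by
      refine LinearMap.ext fun lam => LinearMap.ext fun m => ?_
      show (psiFun X ρM lam m).coeff 1 = lam m
      rw [psiFun_apply, sum_single_apply']
      have h1 : (⟨((1 : G), ((1 : ↥(k2 X)) : H)), k2_prod_mem 1⟩ : ↥X) = 1 :=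
        Subtype.ext (by simp)
      rw [h1, map_one]
      rfl
    have hright : Ψ₀.comp E₂ = LinearMap.id := by
      refine LinearMap.ext fun f => Subtype.ext (LinearMap.ext fun m =>
        MonoidAlgebra.ext (Finsupp.ext fun u => ?_))
      show (psiFun X ρM (E₂ f) m).coeff u = ((f : M →ₗ[𝕜] MonoidAlgebra 𝕜 ↥(k2 X)) m).coeff u
      rw [psiFun_apply, sum_single_apply']
      show ((f : M →ₗ[𝕜] MonoidAlgebra 𝕜 ↥(k2 X))
        (ρM ⟨((1 : G), (u : H)), k2_prod_mem u⟩ m)).coeff 1 = _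
      rw [f.2 (u : H) (k2_prod_mem u) (mem_opXcomp_of_k2 u.2) m]
      exact hB1 u _ _
    let Ψ : (M →ₗ[𝕜] 𝕜) ≃ₗ[𝕜] ↥P₂ := LinearEquiv.ofLinear Ψ₀ E₂ hright hleft
    refine ⟨Ψ, ?_, ?_, ?_⟩
    · intro lam m
      rfl
    · intro f m
      rfl
    · rintro ⟨b, c⟩ h1 h2 lam
      have hcb : (c, b) ∈ X := mem_opp.mp h1
      have hbb : ((b, b) : H × H) ∈ comp (opp X) X := ⟨c, h1, hcb⟩
      apply Subtype.ext
      refine LinearMap.ext fun m => ?_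
      have hF := hρF b c h2 b hbb hcb (Ψ lam) m
      show psiFun X ρM (ρD ⟨(b, c), h1⟩ lam) m = _
      rw [hF]
      have hval : ((Ψ lam : ↥P₂) :
          M →ₗ[𝕜] MonoidAlgebra 𝕜 ↥(k2 X)) = psiFun X ρM lam := rfl
      rw [hval]
      have hinv : ((⟨(c, b), hcb⟩ : ↥X))⁻¹ =
          (⟨(c⁻¹, b⁻¹), by simpa using inv_mem hcb⟩ : ↥X) := Subtype.ext rfl
      rw [hinv, psiFun_apply, psiFun_apply, map_sum,
        Finset.sum_congr rfl (fun h _ => hρB b b hbb h (conj_mem_k2 hcb h.2) _)]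
      simp only [hρD b c h1 hcb, hinv]
      have hcb' : ((c⁻¹, b⁻¹) : G × H) ∈ X := by simpa using inv_mem hcb
      let e : ↥(k2 X) ≃ ↥(k2 X) :=
        { toFun := fun h => ⟨b * (h : H) * b⁻¹, conj_mem_k2 hcb h.2⟩
          invFun := fun h => ⟨b⁻¹ * (h : H) * b, by
            simpa using conj_mem_k2 hcb' h.2⟩
          left_inv := fun h => Subtype.ext (by group)
          right_inv := fun h => Subtype.ext (by group) }
      refine (Fintype.sum_equiv e _ _ ?_).symm
      intro h
      refine congrArg _ ?_
      refine (congrArg lam ?_).symm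
      refine key2 _ _ _ _ (Subtype.ext ?_) m
      simp only [e, Equiv.coe_fn_mk]
      simp [Prod.ext_iff, mul_inv_rev, mul_assoc]

end Stmt11
end

section
/- Let G, H be finite groups, p a prime, 𝕂 a field of characteristic 0 containing a primitive |G×H|-th root of unity, and μ ∈ R(𝕂G,𝕂H) a virtual character of G×H. The following are equivalent: (i) μ is quasi-perfect, i.e. whenever μ(g,h) ≠ 0, g is p-regular if and only if h is p-regular; (ii) d_G ∘ I_μ = I_μ ∘ d_H as maps from class functions on H to class functions on G; (iii) d_H ∘ I_{μ°} = I_{μ°} ∘ d_G as maps from class functions on G to class functions on H. -/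
namespace Stmt15

universe u

/-- `μ` is a virtual `𝕂`-character of `I`, i.e. a difference of characters of two
finite-dimensional representations. -/
def IsVirtualChar (𝕂 : Type u) [Field 𝕂] (I : Type u) [Group I] (μ : I → 𝕂) : Prop :=
  ∃ V W : FDRep 𝕂 I, ∀ x, μ x = V.character x - W.character x

/-- `f` is a class function. -/
def IsClassFn {𝕂 : Type u} [Field 𝕂] {I : Type u} [Group I] (f : I → 𝕂) : Prop :=
  ∀ g x : I, f (x * g * x⁻¹) = f g

/-- The decomposition map `d`: truncation of a class function to the `p`-regular
elements. -/
noncomputable def dmap {𝕂 : Type u} [Field 𝕂] (p : ℕ) {I : Type u} [Group I] (χ : I → 𝕂) : I → 𝕂 :=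
  fun x => if ¬ p ∣ orderOf x then χ x else 0

/-- The map `I_μ` induced by a virtual character `μ` of `G × H`:
`I_μ(ψ)(g) = |H|⁻¹ ∑_{h ∈ H} μ(g,h) ψ(h)`. -/
noncomputable def Imap {𝕂 : Type u} [Field 𝕂] {G H : Type u} [Group G] [Group H] [Fintype H]
    (μ : G × H → 𝕂) (ψ : H → 𝕂) : G → 𝕂 :=
  fun g => (Fintype.card H : 𝕂)⁻¹ * ∑ h : H, μ (g, h) * ψ h

/-- The opposite virtual character `μ°(h,g) = μ(g⁻¹,h⁻¹)`. -/
def dualChar {𝕂 : Type u} [Field 𝕂] {G H : Type u} [Group G] [Group H]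
    (μ : G × H → 𝕂) : H × G → 𝕂 :=
  fun x => μ (x.2⁻¹, x.1⁻¹)

lemma orderOf_conj' {I : Type u} [Group I] (c h : I) : orderOf (c * h * c⁻¹) = orderOf h :=
  orderOf_injective (MulAut.conj c).toMonoidHom (MulAut.conj c).injective h

open Classical in
lemma key {𝕂 : Type u} [Field 𝕂] [CharZero 𝕂] {G H : Type u} [Group G] [Group H]
    [Fintype H] (p : ℕ) (ν : G × H → 𝕂) (hν : IsClassFn ν) :
    (∀ g h, ν (g, h) ≠ 0 → (¬ p ∣ orderOf g ↔ ¬ p ∣ orderOf h)) ↔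
      (∀ ψ : H → 𝕂, IsClassFn ψ → dmap p (Imap ν ψ) = Imap ν (dmap p ψ)) := by
  have hcard : (Fintype.card H : 𝕂)⁻¹ ≠ 0 := by
    simp [Fintype.card_ne_zero]
  have hconj : ∀ (g : G) (h x : H), ν (g, x * h * x⁻¹) = ν (g, h) := by
    intro g h x
    have := hν (g, h) (1, x)
    simpa using this
  constructor
  · intro hi ψ _
    funext g
    by_cases hg : ¬ p ∣ orderOf g
    · show (if ¬ p ∣ orderOf g then Imap ν ψ g else 0) = _
      rw [if_pos hg]
      unfold Imap
      congr 1
      apply Finset.sum_congr rfl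
      intro h _
      by_cases hh : ¬ p ∣ orderOf h
      · simp [dmap, hh]
      · rcases eq_or_ne (ν (g, h)) 0 with h0 | h0
        · simp [h0]
        · exact absurd ((hi g h h0).mp hg) hh
    · show (if ¬ p ∣ orderOf g then Imap ν ψ g else 0) = _
      rw [if_neg hg]
      unfold Imap
      rw [eq_comm, mul_eq_zero]
      right
      apply Finset.sum_eq_zero
      intro h _
      by_cases hh : ¬ p ∣ orderOf h
      · rcases eq_or_ne (ν (g, h)) 0 with h0 | h0
        · simp [h0]
        · exact absurd ((hi g h h0).mpr hh) hg
      · simp [dmap, hh]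
  · intro hii g h hνgh
    set ψ : H → 𝕂 := fun h' => if IsConj h h' then 1 else 0 with hψdef
    have hψ : IsClassFn ψ := by
      intro h' x
      simp only [hψdef]
      congr 1
      simp only [eq_iff_iff]
      have hc2 : IsConj h' (x * h' * x⁻¹) := isConj_iff.mpr ⟨x, rfl⟩
      exact ⟨fun hc => hc.trans hc2.symm, fun hc => hc.trans hc2⟩
    have hsum : ∑ h' : H, ν (g, h') * ψ h' =
        ((Finset.univ.filter (fun h' => IsConj h h')).card : 𝕂) * ν (g, h) := by
      rw [Finset.sum_congr rfl (fun h' _ => by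
        show ν (g, h') * (if IsConj h h' then 1 else 0) = if IsConj h h' then ν (g, h) else 0
        by_cases hc : IsConj h h'
        · obtain ⟨c, hc'⟩ := isConj_iff.mp hc
          rw [if_pos hc, if_pos hc, mul_one, ← hc', hconj]
        · rw [if_neg hc, if_neg hc, mul_zero])]
      rw [← Finset.sum_filter, Finset.sum_const, nsmul_eq_mul]
    have hIne : Imap ν ψ g ≠ 0 := by
      unfold Imap
      rw [hsum]
      refine mul_ne_zero hcard (mul_ne_zero ?_ hνgh)
      have : h ∈ Finset.univ.filter (fun h' => IsConj h h') :=
        Finset.mem_filter.mpr ⟨Finset.mem_univ h, IsConj.refl h⟩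
      simpa using Finset.card_ne_zero_of_mem this
    have hord : ∀ h' : H, IsConj h h' → orderOf h' = orderOf h := by
      intro h' hc
      obtain ⟨c, hc'⟩ := isConj_iff.mp hc
      rw [← hc', orderOf_conj']
    by_cases hh : ¬ p ∣ orderOf h
    · have hdψ : dmap p ψ = ψ := by
        funext h'
        show (if ¬ p ∣ orderOf h' then ψ h' else 0) = ψ h'
        by_cases hc : IsConj h h'
        · rw [if_pos (by rw [hord h' hc]; exact hh)]
        · have hz : ψ h' = 0 := if_neg hc
          rw [hz]
          split <;> rfl
      have := congrFun (hii ψ hψ) g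
      rw [hdψ] at this
      have hg : ¬ p ∣ orderOf g := by
        by_contra hg
        rw [show dmap p (Imap ν ψ) g = 0 from if_neg (by simpa using hg)] at this
        exact hIne this.symm
      simp [hg, hh]
    · have hdψ : dmap p ψ = fun _ => 0 := by
        funext h'
        show (if ¬ p ∣ orderOf h' then ψ h' else 0) = 0
        by_cases hc : IsConj h h'
        · rw [if_neg (by rw [hord h' hc]; simpa using hh)]
        · have : ψ h' = 0 := if_neg hc
          rw [this]
          split <;> rfl
      have := congrFun (hii ψ hψ) g
      rw [hdψ] at this
      have hz : Imap ν (fun _ => (0:𝕂)) g = 0 := by simp [Imap]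
      rw [hz] at this
      have hg : p ∣ orderOf g := by
        by_contra hg
        rw [show dmap p (Imap ν ψ) g = Imap ν ψ g from if_pos hg] at this
        exact hIne this
      simp [hg, hh]

lemma virt_classFn {𝕂 I : Type u} [Field 𝕂] [Group I] {μ : I → 𝕂}
    (hμ : IsVirtualChar 𝕂 I μ) : IsClassFn μ := by
  obtain ⟨V, W, hVW⟩ := hμ
  intro g x
  rw [hVW, hVW, FDRep.char_conj, FDRep.char_conj]

/-- For a virtual character `μ ∈ R(𝕂G,𝕂H)` the following are
equivalent: (i) `μ` is quasi-perfect; (ii) `d_G ∘ I_μ = I_μ ∘ d_H` on class functions;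
(iii) `d_H ∘ I_{μ°} = I_{μ°} ∘ d_G` on class functions. -/
theorem stmt15 {𝕂 : Type u} [Field 𝕂] [CharZero 𝕂] {G H : Type u}
    [Group G] [Group H] [Fintype G] [Fintype H] (p : ℕ) (hp : p.Prime)
    (hroot : ∃ ζ : 𝕂, IsPrimitiveRoot ζ (Fintype.card (G × H)))
    (μ : G × H → 𝕂) (hμ : IsVirtualChar 𝕂 (G × H) μ) :
    ((∀ g h, μ (g, h) ≠ 0 → (¬ p ∣ orderOf g ↔ ¬ p ∣ orderOf h)) ↔
        (∀ ψ : H → 𝕂, IsClassFn ψ → dmap p (Imap μ ψ) = Imap μ (dmap p ψ))) ∧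
      ((∀ g h, μ (g, h) ≠ 0 → (¬ p ∣ orderOf g ↔ ¬ p ∣ orderOf h)) ↔
        (∀ χ : G → 𝕂, IsClassFn χ →
          dmap p (Imap (dualChar μ) χ) = Imap (dualChar μ) (dmap p χ))) := by
  have hcf : IsClassFn μ := virt_classFn hμ
  have hdcf : IsClassFn (dualChar μ) := by
    rintro ⟨h, g⟩ ⟨y, x⟩
    show μ ((x * g * x⁻¹)⁻¹, (y * h * y⁻¹)⁻¹) = μ (g⁻¹, h⁻¹)
    have e1 : (x * g * x⁻¹)⁻¹ = x * g⁻¹ * x⁻¹ := by group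
    have e2 : (y * h * y⁻¹)⁻¹ = y * h⁻¹ * y⁻¹ := by group
    rw [e1, e2]
    exact hcf (g⁻¹, h⁻¹) (x, y)
  have hcond : (∀ g h, μ (g, h) ≠ 0 → (¬ p ∣ orderOf g ↔ ¬ p ∣ orderOf h)) ↔
      (∀ h g, dualChar μ (h, g) ≠ 0 → (¬ p ∣ orderOf h ↔ ¬ p ∣ orderOf g)) := by
    constructor
    · intro hi h g hne
      have := hi g⁻¹ h⁻¹ hne
      rw [orderOf_inv, orderOf_inv] at this
      exact this.symm
    · intro hi g h hne
      have := hi h⁻¹ g⁻¹ (by simpa [dualChar] using hne)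
      rw [orderOf_inv, orderOf_inv] at this
      exact this.symm
  exact ⟨key p μ hcf, hcond.trans (key p (dualChar μ) hdcf)⟩


end Stmt15
end

section
/- Let G and H be finite groups, 𝕂 a field of characteristic 0 containing a primitive |G×H|-th root of unity, and Y ≤ G×H a subgroup with p₁(Y) = G and p₂(Y) = H. Set M := k₁(Y) ⊴ G and N := k₂(Y) ⊴ H, and let η_Y : H/N → G/M be the isomorphism determined by: η_Y(hN) = gM if and only if (g,h) ∈ Y. Suppose S ⊆ Irr(𝕂M) is G-stable, T ⊆ Irr(𝕂N) is H-stable, μ is a virtual 𝕂-character of Y, α : T → S is a bijection and ε : T → {±1} is a family of signs such that Res^Y_{M×N}(μ) = Σ_{χ∈T} ε(χ)·(α(χ)×χ°). Then for every χ ∈ T and every h ∈ H, α(^{h}χ) = ^{g}α(χ) for any g ∈ G with gM = η_Y(hN); in particular α induces a bijection from the set of H-orbits of T onto the set of G-orbits of S. -/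
namespace Stmt19

universe u

/-- `k₁(X) = {g ∈ G ∣ (g,1) ∈ X}`. -/
def k1 {G H : Type*} [Group G] [Group H] (X : Subgroup (G × H)) : Subgroup G :=
  X.comap (MonoidHom.inl G H)

/-- `k₂(X) = {h ∈ H ∣ (1,h) ∈ X}`. -/
def k2 {G H : Type*} [Group G] [Group H] (X : Subgroup (G × H)) : Subgroup H :=
  X.comap (MonoidHom.inr G H)

/-- `p₁(X)`, the image of `X` under the first projection. -/
def p1 {G H : Type*} [Group G] [Group H] (X : Subgroup (G × H)) : Subgroup G :=
  X.map (MonoidHom.fst G H)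

/-- `p₂(X)`, the image of `X` under the second projection. -/
def p2 {G H : Type*} [Group G] [Group H] (X : Subgroup (G × H)) : Subgroup H :=
  X.map (MonoidHom.snd G H)

/-- The opposite subgroup `X° = {(h,g) ∣ (g,h) ∈ X}`. -/
def opp {G H : Type*} [Group G] [Group H] (X : Subgroup (G × H)) : Subgroup (H × G) :=
  X.map ((MulEquiv.prodComm : (G × H) ≃* (H × G)).toMonoidHom)

/-- The composition `X*Y` of subgroup correspondences. -/
def comp {G H K : Type*} [Group G] [Group H] [Group K]
    (X : Subgroup (G × H)) (Y : Subgroup (H × K)) : Subgroup (G × K) where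
  carrier := {gk | ∃ h : H, (gk.1, h) ∈ X ∧ (h, gk.2) ∈ Y}
  one_mem' := ⟨1, X.one_mem, Y.one_mem⟩
  mul_mem' := by
    rintro ⟨g, k⟩ ⟨g', k'⟩ ⟨h, hX, hY⟩ ⟨h', hX', hY'⟩
    exact ⟨h * h', X.mul_mem hX hX', Y.mul_mem hY hY'⟩
  inv_mem' := by
    rintro ⟨g, k⟩ ⟨h, hX, hY⟩
    exact ⟨h⁻¹, X.inv_mem hX, Y.inv_mem hY⟩

lemma mem_comp {G H K : Type*} [Group G] [Group H] [Group K]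
    {X : Subgroup (G × H)} {Y : Subgroup (H × K)} {x : G × K} :
    x ∈ comp X Y ↔ ∃ h : H, (x.1, h) ∈ X ∧ (h, x.2) ∈ Y := Iff.rfl

lemma mem_opp {G H : Type*} [Group G] [Group H] {X : Subgroup (G × H)} {x : H × G} :
    x ∈ opp X ↔ (x.2, x.1) ∈ X := by
  rw [opp, Subgroup.mem_map]
  constructor
  · rintro ⟨⟨g, h⟩, hgh, rfl⟩
    simpa using hgh
  · intro hx
    exact ⟨(x.2, x.1), hx, rfl⟩

/-- The diagonal subgroup `Δ(P) = {(g,g) ∣ g ∈ P} ≤ G × G`. -/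
def diag {G : Type*} [Group G] (P : Subgroup G) : Subgroup (G × G) :=
  (P.subtype.prod P.subtype).range

/-- The twisted diagonal subgroup `Δ(P,φ,Q) = {(φ y, y) ∣ y ∈ Q} ≤ G × H`. -/
def tdiag {G H : Type*} [Group G] [Group H] (P : Subgroup G) (Q : Subgroup H)
    (φ : Q ≃* P) : Subgroup (G × H) :=
  ((P.subtype.comp φ.toMonoidHom).prod Q.subtype).range

/-- `μ` is a virtual `𝕂`-character of `I`. -/
def IsVirtualChar (𝕂 : Type u) [Field 𝕂] (I : Type u) [Group I] (μ : I → 𝕂) : Prop :=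
  ∃ V W : FDRep 𝕂 I, ∀ x, μ x = V.character x - W.character x

/-- `χ` is an irreducible `𝕂`-character of `I`. -/
def IsIrrChar (𝕂 : Type u) [Field 𝕂] (I : Type u) [Group I] (χ : I → 𝕂) : Prop :=
  ∃ V : FDRep 𝕂 I, CategoryTheory.Simple V ∧ ∀ x, χ x = V.character x

/-- The conjugate character `^g χ`, with `(^g χ)(x) = χ(g⁻¹ x g)`, of a character
of a normal subgroup `M ⊴ G`. -/
def conjChar {𝕂 : Type u} [Field 𝕂] {G : Type u} [Group G] (M : Subgroup G)
    (hM : M.Normal) (g : G) (χ : ↥M → 𝕂) : ↥M → 𝕂 :=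
  fun x => χ ⟨g⁻¹ * (x : G) * g, by simpa using hM.conj_mem _ x.2 g⁻¹⟩


section Helpers

open CategoryTheory LinearMap CategoryTheory.MonoidalCategory Representation Module FDRep

variable {k : Type u} [Field k] [CharZero k]

lemma sum_char_eq_card_mul {G : GrpCat.{u}} [Fintype G] (V W : FDRep k G) :
    ∑ g : G, V.character g * W.character g⁻¹ =
      (Fintype.card G : k) * (finrank k (W ⟶ V) : k) := by
  letI : Invertible (Fintype.card G : k) :=
    invertibleOfNonzero (by exact_mod_cast Fintype.card_ne_zero)
  have key : ⅟(Fintype.card G : k) • ∑ g : G, V.character g * W.character g⁻¹ =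
      (finrank k (W ⟶ V) : k) := by
    conv_lhs =>
      enter [2, 2, g]
      rw [mul_comm, ← FDRep.char_dual, ← Pi.mul_apply, ← FDRep.char_tensor]
      rw [char_iso (FDRep.dualTensorIsoLinHom W.ρ V)]
    haveI : Invertible (Nat.card G : k) := by rwa [Nat.card_eq_fintype_card]
    rw [invOf_eq_inv, smul_eq_mul, ← Nat.card_eq_fintype_card]
    rw [average_char_eq_finrank_invariants]
    rw [show (of (linHom W.ρ V.ρ)).ρ = linHom W.ρ V.ρ from FDRep.of_ρ' (linHom W.ρ V.ρ)]
    erw [(linHom.invariantsEquivFDRepHom W V).finrank_eq]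
  calc ∑ g : G, V.character g * W.character g⁻¹
      = (Fintype.card G : k) * (⅟(Fintype.card G : k) •
          ∑ g : G, V.character g * W.character g⁻¹) := by
        rw [smul_eq_mul, ← mul_assoc, mul_invOf_self, one_mul]
    _ = _ := by rw [key]

lemma sum_char_eq_zero {G : GrpCat.{u}} [Fintype G] (V W : FDRep k G)
    [Simple V] [Simple W] (hne : V.character ≠ W.character) :
    ∑ g : G, V.character g * W.character g⁻¹ = 0 := by
  rw [sum_char_eq_card_mul]
  have : Subsingleton (W ⟶ V) := by
    constructor
    intro f f'
    have hz : ∀ u : W ⟶ V, u = 0 := by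
      intro u
      by_contra hu
      haveI := isIso_of_hom_simple hu
      exact hne (char_iso (asIso u).symm)
    rw [hz f, hz f']
  rw [finrank_zero_of_subsingleton]
  simp

lemma sum_char_self_ne_zero {G : GrpCat.{u}} [Fintype G] (V : FDRep k G) [Simple V] :
    ∑ g : G, V.character g * V.character g⁻¹ ≠ 0 := by
  rw [sum_char_eq_card_mul]
  have h1 : finrank k (V ⟶ V) ≠ 0 := by
    have : (𝟙 V : V ⟶ V) ≠ 0 := CategoryTheory.id_nonzero V
    have hnt : Nontrivial (V ⟶ V) := ⟨⟨𝟙 V, 0, this⟩⟩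
    have hfd : FiniteDimensional k (V ⟶ V) :=
      (linHom.invariantsEquivFDRepHom V V).finiteDimensional
    exact (Module.finrank_pos_iff.mpr hnt).ne'
  have h2 : (Fintype.card G : k) ≠ 0 := by exact_mod_cast Fintype.card_ne_zero
  exact mul_ne_zero h2 (by exact_mod_cast h1)

lemma finrank_ne_zero_of_simple {G : GrpCat.{u}} (V : FDRep k G) [Simple V] :
    finrank k V ≠ 0 := by
  intro h0
  have hsub : Subsingleton V := Module.finrank_zero_iff.mp h0
  haveI : Subsingleton (V →ₗ[k] V) :=
    ⟨fun f f' => LinearMap.ext fun x => Subsingleton.elim _ _⟩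
  haveI : Subsingleton ((linHom V.ρ V.ρ).invariants) :=
    ⟨fun a b => Subtype.ext (Subsingleton.elim _ _)⟩
  haveI : Subsingleton (V ⟶ V) :=
    Equiv.subsingleton (linHom.invariantsEquivFDRepHom V V).symm.toEquiv
  exact CategoryTheory.id_nonzero V (Subsingleton.elim _ _)

/-- Coefficient extraction against a finite set of (distinct) irreducible characters. -/
lemma coeff_ext {N : Type u} [Group N] [Fintype N]
    (T : Finset (N → k)) (hTirr : ∀ χ ∈ T, IsIrrChar k N χ)
    (c d : (N → k) → k)
    (hcd : ∀ n : N, ∑ χ ∈ T, c χ * χ n⁻¹ = ∑ χ ∈ T, d χ * χ n⁻¹)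
    {χ₀ : N → k} (hχ₀ : χ₀ ∈ T) : c χ₀ = d χ₀ := by
  obtain ⟨V₀, hV₀s, hV₀⟩ := hTirr χ₀ hχ₀
  haveI := hV₀s
  letI : Fintype ↥(GrpCat.of N) := inferInstanceAs (Fintype N)
  have horth : ∀ χ ∈ T, χ ≠ χ₀ → ∑ n : N, χ₀ n * χ n⁻¹ = 0 := by
    intro χ hχ hne
    obtain ⟨V, hVs, hV⟩ := hTirr χ hχ
    haveI := hVs
    have : ∀ n : N, χ₀ n * χ n⁻¹ = V₀.character n * V.character n⁻¹ := by
      intro n; rw [hV₀, hV]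
    rw [Finset.sum_congr rfl fun n _ => this n]
    refine sum_char_eq_zero (G := GrpCat.of N) V₀ V ?_
    intro hcontra
    apply hne
    funext x
    rw [hV, hV₀, hcontra]
  have hself : ∑ n : N, χ₀ n * χ₀ n⁻¹ ≠ 0 := by
    have : ∀ n : N, χ₀ n * χ₀ n⁻¹ = V₀.character n * V₀.character n⁻¹ := by
      intro n; rw [hV₀, hV₀]
    rw [Finset.sum_congr rfl fun n _ => this n]
    exact sum_char_self_ne_zero (G := GrpCat.of N) V₀
  have key : ∀ e : (N → k) → k,
      ∑ n : N, (∑ χ ∈ T, e χ * χ n⁻¹) * χ₀ n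
        = e χ₀ * ∑ n : N, χ₀ n * χ₀ n⁻¹ := by
    intro e
    have : ∀ n : N, (∑ χ ∈ T, e χ * χ n⁻¹) * χ₀ n = ∑ χ ∈ T, e χ * (χ₀ n * χ n⁻¹) := by
      intro n; rw [Finset.sum_mul]; exact Finset.sum_congr rfl fun χ _ => by ring
    rw [Finset.sum_congr rfl fun n _ => this n, Finset.sum_comm]
    rw [Finset.sum_eq_single_of_mem χ₀ hχ₀ (fun χ hχ hne => by
      rw [← Finset.mul_sum, horth χ hχ hne, mul_zero])]
    rw [← Finset.mul_sum]
  have heq := key c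
  rw [Finset.sum_congr rfl fun n _ => congrArg (· * χ₀ n) (hcd n), key d] at heq
  exact (mul_right_cancel₀ hself heq).symm

lemma conjChar_mul {𝕂 : Type u} [Field 𝕂] {G : Type u} [Group G] (M : Subgroup G)
    (hM : M.Normal) (a b : G) (χ : ↥M → 𝕂) :
    conjChar M hM a (conjChar M hM b χ) = conjChar M hM (a * b) χ := by
  funext x
  show χ _ = χ _
  congr 1
  apply Subtype.ext
  show b⁻¹ * (a⁻¹ * ↑x * a) * b = (a * b)⁻¹ * ↑x * (a * b)
  group

lemma conjChar_one {𝕂 : Type u} [Field 𝕂] {G : Type u} [Group G] (M : Subgroup G)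
    (hM : M.Normal) (χ : ↥M → 𝕂) :
    conjChar M hM 1 χ = χ := by
  funext x
  show χ _ = χ _
  congr 1
  apply Subtype.ext
  show (1 : G)⁻¹ * ↑x * 1 = ↑x
  group

lemma conjChar_apply_one {𝕂 : Type u} [Field 𝕂] {G : Type u} [Group G] (M : Subgroup G)
    (hM : M.Normal) (a : G) (χ : ↥M → 𝕂) :
    conjChar M hM a χ 1 = χ 1 := by
  show χ _ = χ _
  congr 1
  apply Subtype.ext
  show a⁻¹ * ((1 : ↥M) : G) * a = ((1 : ↥M) : G)
  simp

lemma irrChar_apply_one {I : Type u} [Group I] {χ : I → k}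
    (h : IsIrrChar k I χ) : ∃ d : ℕ, d ≠ 0 ∧ χ 1 = (d : k) := by
  obtain ⟨V, hVs, hV⟩ := h
  haveI := hVs
  refine ⟨finrank k V, finrank_ne_zero_of_simple (G := GrpCat.of I) V, ?_⟩
  rw [hV, FDRep.char_one]

lemma sign_eq_sign {e1 e2 : ℤ} (h1 : e1 = 1 ∨ e1 = -1) (h2 : e2 = 1 ∨ e2 = -1)
    {a b : ℕ} (ha : a ≠ 0) (hb : b ≠ 0) (h : (e1 : k) * a = (e2 : k) * b) :
    e1 = e2 := by
  have hcast : ∀ a b : ℕ, a ≠ 0 → ((a : k) = -(b : k) → False) := by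
    intro a b ha' hab
    have : ((a + b : ℕ) : k) = 0 := by push_cast; rw [hab]; ring
    have : a + b = 0 := by exact_mod_cast this
    omega
  rcases h1 with rfl | rfl <;> rcases h2 with rfl | rfl
  · rfl
  · exfalso
    refine hcast a b ha ?_
    push_cast at h
    linear_combination h
  · exfalso
    refine hcast b a hb ?_
    push_cast at h
    linear_combination -h
  · rfl

end Helpers

/-- Let `Y ≤ G×H` with `p₁(Y) = G`, `p₂(Y) = H`, `M := k₁(Y) ⊴ G`,
`N := k₂(Y) ⊴ H`.  Suppose `S ⊆ Irr(𝕂M)` is `G`-stable, `T ⊆ Irr(𝕂N)` is `H`-stable,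
`μ` is a virtual character of `Y`, `α : T → S` a bijection and `ε : T → {±1}` signs
with `Res^Y_{M×N}(μ) = ∑_{χ∈T} ε(χ)·(α(χ)×χ°)`.  Then for every `χ ∈ T`, `h ∈ H`
and `g ∈ G` with `(g,h) ∈ Y` (i.e. `g·M = η_Y(h·N)`) one has `α(^hχ) = ^g(α χ)`;
in particular `α` induces a bijection from the `H`-orbits of `T` onto the
`G`-orbits of `S`. -/
theorem stmt19 {𝕂 : Type u} [Field 𝕂] [CharZero 𝕂] {G H : Type u}
    [Group G] [Group H] [Fintype G] [Fintype H]
    (hroot : ∃ ζ : 𝕂, IsPrimitiveRoot ζ (Fintype.card (G × H)))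
    (Y : Subgroup (G × H)) (hp1 : p1 Y = ⊤) (hp2 : p2 Y = ⊤)
    (hMnorm : (k1 Y).Normal) (hNnorm : (k2 Y).Normal)
    (S : Set (↥(k1 Y) → 𝕂)) (hSirr : ∀ χ ∈ S, IsIrrChar 𝕂 ↥(k1 Y) χ)
    (hSstab : ∀ (g : G), ∀ χ ∈ S, conjChar (k1 Y) hMnorm g χ ∈ S)
    (T : Finset (↥(k2 Y) → 𝕂)) (hTirr : ∀ χ ∈ T, IsIrrChar 𝕂 ↥(k2 Y) χ)
    (hTstab : ∀ (h : H), ∀ χ ∈ T, conjChar (k2 Y) hNnorm h χ ∈ T)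
    (μ : ↥Y → 𝕂) (hμ : IsVirtualChar 𝕂 ↥Y μ)
    (α : (↥(k2 Y) → 𝕂) → (↥(k1 Y) → 𝕂)) (hα : Set.BijOn α (↑T) S)
    (ε : (↥(k2 Y) → 𝕂) → ℤ) (hε : ∀ χ ∈ T, ε χ = 1 ∨ ε χ = -1)
    (hres : ∀ (m : ↥(k1 Y)) (n : ↥(k2 Y)),
      μ ⟨((m : G), (n : H)), by
        have h1 : (((m : G), (1 : H)) : G × H) ∈ Y := m.2
        have h2 : (((1 : G), (n : H)) : G × H) ∈ Y := n.2
        simpa using Y.mul_mem h1 h2⟩ =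
      ∑ χ ∈ T, (ε χ : 𝕂) * (α χ m * χ n⁻¹)) :
    (∀ χ ∈ T, ∀ (g : G) (h : H), (g, h) ∈ Y →
        α (conjChar (k2 Y) hNnorm h χ) = conjChar (k1 Y) hMnorm g (α χ)) ∧
      (∀ χ ∈ T, ∀ χ' ∈ T,
        ((∃ h : H, χ' = conjChar (k2 Y) hNnorm h χ) ↔
          (∃ g : G, α χ' = conjChar (k1 Y) hMnorm g (α χ)))) := by
  classical
  letI : Fintype ↥(k1 Y) := Fintype.ofFinite _
  letI : Fintype ↥(k2 Y) := Fintype.ofFinite _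
  -- μ is a class function on Y
  have hclass : ∀ x y : ↥Y, μ (y⁻¹ * x * y) = μ x := by
    obtain ⟨V, W, hVW⟩ := hμ
    have hch : ∀ (U : FDRep 𝕂 ↥Y) (x y : ↥Y), U.character (y⁻¹ * x * y) = U.character x := by
      intro U x y
      rw [mul_assoc, FDRep.char_mul_comm, mul_assoc, mul_inv_cancel, mul_one]
    intro x y
    rw [hVW, hVW, hch, hch]
  -- existence of partners
  have exg : ∀ h : H, ∃ g : G, (g, h) ∈ Y := by
    intro h
    have : h ∈ p2 Y := hp2 ▸ Subgroup.mem_top h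
    rcases Subgroup.mem_map.mp this with ⟨⟨g', h'⟩, hmem, hsnd⟩
    have : h' = h := hsnd
    exact ⟨g', this ▸ hmem⟩
  have exh : ∀ g : G, ∃ h : H, (g, h) ∈ Y := by
    intro g
    have : g ∈ p1 Y := hp1 ▸ Subgroup.mem_top g
    rcases Subgroup.mem_map.mp this with ⟨⟨g', h'⟩, hmem, hfst⟩
    have : g' = g := hfst
    exact ⟨h', this ▸ hmem⟩
  -- the main statement
  have main : ∀ χ ∈ T, ∀ (g : G) (h : H), (g, h) ∈ Y →
      α (conjChar (k2 Y) hNnorm h χ) = conjChar (k1 Y) hMnorm g (α χ) := by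
    intro χ hχ g h hy
    set σ : (↥(k2 Y) → 𝕂) → (↥(k2 Y) → 𝕂) := conjChar (k2 Y) hNnorm h with hσ
    set σ' : (↥(k2 Y) → 𝕂) → (↥(k2 Y) → 𝕂) := conjChar (k2 Y) hNnorm h⁻¹ with hσ'
    have hσσ' : ∀ ψ, σ (σ' ψ) = ψ := by
      intro ψ; rw [hσ, hσ', conjChar_mul, mul_inv_cancel, conjChar_one]
    have hσ'σ : ∀ ψ, σ' (σ ψ) = ψ := by
      intro ψ; rw [hσ, hσ', conjChar_mul, inv_mul_cancel, conjChar_one]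
    set y : ↥Y := ⟨(g, h), hy⟩ with hydef
    set cg : ↥(k1 Y) → ↥(k1 Y) :=
      fun m => ⟨g⁻¹ * (m : G) * g, by simpa using hMnorm.conj_mem _ m.2 g⁻¹⟩ with hcg
    set ch : ↥(k2 Y) → ↥(k2 Y) :=
      fun n => ⟨h⁻¹ * (n : H) * h, by simpa using hNnorm.conj_mem _ n.2 h⁻¹⟩ with hch
    have hres' : ∀ (m : ↥(k1 Y)) (n : ↥(k2 Y)),
        ∑ x ∈ T, (ε x : 𝕂) * (α x (cg m) * x (ch n)⁻¹) =
          ∑ x ∈ T, (ε x : 𝕂) * (α x m * x n⁻¹) := by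
      intro m n
      rw [← hres (cg m) (ch n), ← hres m n]
      have hc := hclass (⟨(((m : G), (n : H))), by
        have h1 : (((m : G), (1 : H)) : G × H) ∈ Y := m.2
        have h2 : (((1 : G), (n : H)) : G × H) ∈ Y := n.2
        simpa using Y.mul_mem h1 h2⟩ : ↥Y) y
      refine Eq.trans ?_ hc
      congr 1
    -- rewrite in conjChar form
    have hA : ∀ (ψ : ↥(k1 Y) → 𝕂) (m : ↥(k1 Y)),
        ψ (cg m) = conjChar (k1 Y) hMnorm g ψ m := fun ψ m => rfl
    have hB : ∀ (ψ : ↥(k2 Y) → 𝕂) (n : ↥(k2 Y)),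
        ψ ((ch n)⁻¹) = conjChar (k2 Y) hNnorm h ψ n⁻¹ := by
      intro ψ n
      show ψ _ = ψ _
      congr 1
      apply Subtype.ext
      show (h⁻¹ * (n : H) * h)⁻¹ = h⁻¹ * ((n⁻¹ : ↥(k2 Y)) : H) * h
      show (h⁻¹ * (n : H) * h)⁻¹ = h⁻¹ * ((n : H))⁻¹ * h
      group
    have hres'' : ∀ (m : ↥(k1 Y)) (n : ↥(k2 Y)),
        ∑ x ∈ T, (ε x : 𝕂) * (conjChar (k1 Y) hMnorm g (α x) m * σ x n⁻¹) =
          ∑ x ∈ T, (ε x : 𝕂) * (α x m * x n⁻¹) := by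
      intro m n
      rw [← hres' m n]
      refine Finset.sum_congr rfl fun x _ => ?_
      rw [← hA (α x) m, hσ, ← hB x n]
    -- coefficient extraction
    have star : ∀ χ₀ ∈ T, ∀ m : ↥(k1 Y),
        (ε (σ' χ₀) : 𝕂) * conjChar (k1 Y) hMnorm g (α (σ' χ₀)) m =
          (ε χ₀ : 𝕂) * α χ₀ m := by
      intro χ₀ hχ₀ m
      refine coeff_ext (k := 𝕂) T hTirr
        (fun x => (ε (σ' x) : 𝕂) * conjChar (k1 Y) hMnorm g (α (σ' x)) m)
        (fun x => (ε x : 𝕂) * α x m) ?_ hχ₀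
      intro n
      calc ∑ x ∈ T, ((ε (σ' x) : 𝕂) * conjChar (k1 Y) hMnorm g (α (σ' x)) m) * x n⁻¹
          = ∑ x ∈ T, (ε x : 𝕂) * (conjChar (k1 Y) hMnorm g (α x) m * σ x n⁻¹) := by
            refine Finset.sum_nbij' σ' σ (fun a ha => hTstab h⁻¹ a ha)
              (fun a ha => hTstab h a ha) (fun a _ => hσσ' a) (fun a _ => hσ'σ a)
              (fun a ha => ?_)
            rw [hσσ' a]
            ring
        _ = ∑ x ∈ T, (ε x : 𝕂) * (α x m * x n⁻¹) := hres'' m n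
        _ = ∑ x ∈ T, ((ε x : 𝕂) * α x m) * x n⁻¹ := by
            refine Finset.sum_congr rfl fun x _ => ?_
            ring
    have hσχT : σ χ ∈ T := hTstab h χ hχ
    have starχ : ∀ m : ↥(k1 Y),
        (ε χ : 𝕂) * conjChar (k1 Y) hMnorm g (α χ) m = (ε (σ χ) : 𝕂) * α (σ χ) m := by
      intro m
      have := star (σ χ) hσχT m
      rwa [hσ'σ χ] at this
    -- compare signs using values at 1
    obtain ⟨d1, hd1, hv1⟩ := irrChar_apply_one (hSirr (α χ) (hα.mapsTo hχ))
    obtain ⟨d2, hd2, hv2⟩ := irrChar_apply_one (hSirr (α (σ χ)) (hα.mapsTo hσχT))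
    have hsign : ε χ = ε (σ χ) := by
      have h1 := starχ 1
      rw [conjChar_apply_one, hv1, hv2] at h1
      exact sign_eq_sign (hε χ hχ) (hε (σ χ) hσχT) hd1 hd2 h1
    have hεne : (ε χ : 𝕂) ≠ 0 := by
      rcases hε χ hχ with he | he <;> rw [he] <;> norm_num
    funext m
    have := starχ m
    rw [← hsign] at this
    exact (mul_left_cancel₀ hεne this).symm
  refine ⟨main, ?_⟩
  intro χ hχ χ' hχ'
  constructor
  · rintro ⟨h, rfl⟩
    obtain ⟨g, hg⟩ := exg h
    exact ⟨g, main χ hχ g h hg⟩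
  · rintro ⟨g, hg⟩
    obtain ⟨h, hy⟩ := exh g
    refine ⟨h, ?_⟩
    have h1 := main χ hχ g h hy
    have h2 : α χ' = α (conjChar (k2 Y) hNnorm h χ) := by rw [h1, hg]
    exact hα.injOn hχ' (hTstab h χ hχ) h2


end Stmt19
end
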